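/- For a distortion risk measure ρ(Z) = E[Z γ(F_Z(Z))] with non-decreasing weight γ and jointly continuous random variables (Y, W), under differentiability assumptions on ε ↦ F^{-1}_{Y+εW}, the Gâteaux derivative of ρ at Y in direction W is lim_{ε→0} (ρ(Y + εW) - ρ(Y))/ε = E[W γ(U_Y)], where U_Y = F_Y(Y). -/

import Mathlib

open MeasureTheory ProbabilityTheory Topology

/-- The (left-)quantile function of a law on `ℝ`. -/
noncomputable def quantileFn (ν : Measure ℝ) (u : ℝ) : ℝ :=
  sInf {x : ℝ | u ≤ cdf ν x}

/-- The distortion risk measure `ρ(Z) = E[Z γ(F_Z(Z))]`. -/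
noncomputable def distRM {Ω : Type*} [MeasurableSpace Ω] (μ : Measure Ω)
    (γ : ℝ → ℝ) (Z : Ω → ℝ) : ℝ :=
  ∫ ω, Z ω * γ (cdf (μ.map Z) (Z ω)) ∂μ

/-! ### Auxiliary lemmas -/

section Aux

open Set Filter

/-- clamp to [0,1] -/
noncomputable def clamp01 (x : ℝ) : ℝ := max 0 (min 1 x)

lemma clamp01_mem (x : ℝ) : clamp01 x ∈ Icc (0:ℝ) 1 := by
  refine ⟨le_max_left _ _, max_le zero_le_one (min_le_left _ _)⟩

lemma clamp01_of_mem {x : ℝ} (hx : x ∈ Icc (0:ℝ) 1) : clamp01 x = x := by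
  simp only [clamp01, min_eq_right hx.2, max_eq_right hx.1]

lemma clamp01_monotone : Monotone clamp01 := by
  intro a b hab
  exact max_le_max le_rfl (min_le_min le_rfl hab)

lemma clamp01_measurable : Measurable clamp01 :=
  measurable_const.max (measurable_const.min measurable_id)

/-- A probability measure on ℝ with no atoms has continuous cdf. -/
lemma aux_cdf_continuous (ν : Measure ℝ) [IsProbabilityMeasure ν]
    (h : ∀ x : ℝ, ν {x} = 0) : Continuous (cdf ν) := by
  have hmono : Monotone (cdf ν) := monotone_cdf ν
  rw [continuous_iff_continuousAt]
  intro x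
  rw [hmono.continuousAt_iff_leftLim_eq_rightLim]
  have h1 : (cdf ν).measure {x} = 0 := by rw [measure_cdf]; exact h x
  rw [StieltjesFunction.measure_singleton] at h1
  have hle : Function.leftLim (cdf ν) x ≤ cdf ν x := Monotone.leftLim_le hmono le_rfl
  have h2 : Function.leftLim (cdf ν) x = cdf ν x := by
    have := ENNReal.ofReal_eq_zero.mp h1
    linarith
  have h3 : Function.rightLim (cdf ν) x = cdf ν x := by
    rw [← Monotone.continuousWithinAt_Ioi_iff_rightLim_eq hmono]
    exact ((cdf ν).right_continuous x).mono Ioi_subset_Ici_self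
  rw [h2, h3]


/-- An upward-closed set of reals is empty, univ, or sandwiched between Ioi and Ici. -/
lemma aux_upperSet_cases (S : Set ℝ) (hS : ∀ ⦃x y : ℝ⦄, x ∈ S → x ≤ y → y ∈ S) :
    S = ∅ ∨ S = univ ∨ ∃ s : ℝ, Ioi s ⊆ S ∧ S ⊆ Ici s := by
  rcases S.eq_empty_or_nonempty with hE | ⟨a, ha⟩
  · exact Or.inl hE
  by_cases hU : S = univ
  · exact Or.inr (Or.inl hU)
  right; right
  obtain ⟨b, hb⟩ : ∃ b, b ∉ S := by
    by_contra hc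
    push_neg at hc
    exact hU (eq_univ_of_forall hc)
  have hbdd : BddBelow S := ⟨b, fun x hx => by
    by_contra hlt
    exact hb (hS hx (le_of_not_ge hlt))⟩
  refine ⟨sInf S, fun x hx => ?_, fun x hx => csInf_le hbdd hx⟩
  obtain ⟨y, hy, hyx⟩ := exists_lt_of_csInf_lt ⟨a, ha⟩ hx
  exact hS hy hyx.le


/-- Key rearrangement step: among events of equal probability, upper sets of `Z`
maximize `∫ Z`. -/
lemma aux_upper_max {Ω : Type*} [MeasurableSpace Ω] (μ : Measure Ω) [IsProbabilityMeasure μ]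
    (Z : Ω → ℝ) (hZm : Measurable Z) (hZint : Integrable Z μ)
    (A : Set Ω) (hA : MeasurableSet A) (S : Set ℝ)
    (hS : ∀ ⦃x y : ℝ⦄, x ∈ S → x ≤ y → y ∈ S) (hSm : MeasurableSet S)
    (hAB : μ A = μ (Z ⁻¹' S)) :
    ∫ ω in A, Z ω ∂μ ≤ ∫ ω in Z ⁻¹' S, Z ω ∂μ := by
  set B := Z ⁻¹' S with hBdef
  have hB : MeasurableSet B := hZm hSm
  rcases aux_upperSet_cases S hS with hE | hU | ⟨s, hIoi, hIci⟩
  · -- S empty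
    have hBe : B = ∅ := by rw [hBdef, hE]; simp
    have hA0 : μ A = 0 := by rw [hAB, hBe]; simp
    have hr : μ.restrict A = 0 := Measure.restrict_eq_zero.2 hA0
    rw [hBe, hr]
    simp
  · -- S univ
    have hBu : B = univ := by rw [hBdef, hU]; simp
    have hAu : A =ᵐ[μ] (univ : Set Ω) := by
      rw [ae_eq_univ]
      have : μ A = 1 := by rw [hAB, hBu]; simp
      rw [prob_compl_eq_one_sub hA, this]
      simp
    rw [hBu]
    exact le_of_eq (setIntegral_congr_set hAu)
  · -- sandwich case
    have hZBint : IntegrableOn Z B μ := hZint.integrableOn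
    have hZAint : IntegrableOn Z A μ := hZint.integrableOn
    have key : 0 ≤ ∫ ω, (B.indicator (fun ω => Z ω - s) ω - A.indicator (fun ω => Z ω - s) ω) ∂μ := by
      refine integral_nonneg fun ω => ?_
      show (0:ℝ) ≤ _
      by_cases hω : ω ∈ B
      · have h1 : Z ω - s ≥ 0 := by
          have := hIci hω
          simp only [mem_Ici] at this
          linarith
        by_cases hω' : ω ∈ A
        · simp only [indicator_of_mem hω, indicator_of_mem hω']
          linarith
        · simp only [indicator_of_mem hω, indicator_of_notMem hω']
          linarith
      · have h1 : Z ω - s ≤ 0 := by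
          have : Z ω ∉ Ioi s := fun hc => hω (hIoi hc)
          simp only [mem_Ioi, not_lt] at this
          linarith
        by_cases hω' : ω ∈ A
        · simp only [indicator_of_notMem hω, indicator_of_mem hω']
          linarith
        · simp only [indicator_of_notMem hω, indicator_of_notMem hω']
          simp
    have hint : ∀ (X : Set Ω), MeasurableSet X → ∫ ω, X.indicator (fun ω => Z ω - s) ω ∂μ
        = ∫ ω in X, Z ω ∂μ - s * (μ X).toReal := by
      intro X hX
      rw [integral_indicator hX, integral_sub hZint.integrableOn (integrableOn_const (measure_lt_top μ X).ne)]
      rw [setIntegral_const, smul_eq_mul, measureReal_def]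
      ring
    have hiB : Integrable (B.indicator (fun ω => Z ω - s)) μ :=
      (hZint.sub (integrable_const s)).indicator hB
    have hiA : Integrable (A.indicator (fun ω => Z ω - s)) μ :=
      (hZint.sub (integrable_const s)).indicator hA
    rw [integral_sub hiB hiA, hint B hB, hint A hA, hAB] at key
    linarith


lemma aux_layer {Ω : Type*} [MeasurableSpace Ω] (μ : Measure Ω) [IsProbabilityMeasure μ]
    (g : ℝ → ℝ) (hgm : Measurable g) (B : ℝ) (hgB : ∀ x, g x ∈ Icc (0:ℝ) B)
    (Z : Ω → ℝ) (hZm : Measurable Z) (hZint : Integrable Z μ)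
    (U : Ω → ℝ) (hUm : Measurable U) :
    (∫ ω, Z ω * g (U ω) ∂μ
      = ∫ t in Ioc (0:ℝ) B, (∫ ω in U ⁻¹' {x | t ≤ g x}, Z ω ∂μ) ∂volume)
    ∧ Integrable (fun t => ∫ ω in U ⁻¹' {x | t ≤ g x}, Z ω ∂μ)
        (volume.restrict (Ioc (0:ℝ) B)) := by
  have hB0 : 0 ≤ B := (hgB 0).1.trans (hgB 0).2
  set ν := volume.restrict (Ioc (0:ℝ) B) with hν
  -- the two-variable function
  set h : Ω × ℝ → ℝ := fun p => Z p.1 * (if p.2 ≤ g (U p.1) then (1:ℝ) else 0) with hh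
  have hSmeas : MeasurableSet {p : Ω × ℝ | p.2 ≤ g (U p.1)} :=
    measurableSet_le measurable_snd ((hgm.comp hUm).comp measurable_fst)
  have hhm : Measurable h := by
    apply (hZm.comp measurable_fst).mul
    exact Measurable.ite hSmeas measurable_const measurable_const
  have hZfst : Integrable (fun p : Ω × ℝ => Z p.1) (μ.prod ν) := by
    rw [integrable_prod_iff (Measurable.aestronglyMeasurable
      (show Measurable (fun p : Ω × ℝ => Z p.1) from hZm.comp measurable_fst))]
    constructor
    · exact Eventually.of_forall fun ω => integrable_const (Z ω)
    · simp only [norm_norm, integral_const, smul_eq_mul]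
      exact (hZint.norm.const_mul _).congr (Eventually.of_forall fun ω => by ring)
  have hhint : Integrable h (μ.prod ν) := by
    refine hZfst.norm.mono' hhm.aestronglyMeasurable (Eventually.of_forall fun p => ?_)
    rw [hh]
    simp only [Real.norm_eq_abs, abs_mul]
    rcases le_or_gt p.2 (g (U p.1)) with hc | hc
    · simp [hc]
    · simp [not_le.2 hc, abs_nonneg]
  -- inner integral over t computes g(U ω)
  have hkey : ∀ c ∈ Icc (0:ℝ) B, ∫ t in Ioc (0:ℝ) B, (if t ≤ c then (1:ℝ) else 0) = c := by
    intro c hc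
    have : (fun t => if t ≤ c then (1:ℝ) else 0) = (Iic c).indicator (fun _ => (1:ℝ)) := by
      ext t
      by_cases ht : t ≤ c <;> simp [ht, indicator, mem_Iic]
    rw [this, setIntegral_indicator measurableSet_Iic, setIntegral_const, Ioc_inter_Iic,
      measureReal_def, Real.volume_Ioc, smul_eq_mul, mul_one]
    rw [min_eq_right hc.2]
    rw [ENNReal.toReal_ofReal (by linarith [hc.1])]
    ring
  have hleft : ∀ ω, ∫ t, h (ω, t) ∂ν = Z ω * g (U ω) := by
    intro ω
    rw [hh]
    simp only
    rw [integral_const_mul, hkey _ (hgB (U ω))]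
  have hinner : ∀ t : ℝ, ∫ ω, h (ω, t) ∂μ = ∫ ω in U ⁻¹' {x | t ≤ g x}, Z ω ∂μ := by
    intro t
    have hTm : MeasurableSet {x : ℝ | t ≤ g x} := hgm measurableSet_Ici
    rw [← integral_indicator (hUm hTm)]
    congr 1
    ext ω
    by_cases hω : ω ∈ U ⁻¹' {x | t ≤ g x}
    · have : t ≤ g (U ω) := hω
      simp [hh, indicator_of_mem hω, this]
    · have : ¬ t ≤ g (U ω) := hω
      simp [hh, indicator_of_notMem hω, this]
  have hswap := integral_integral_swap (f := fun ω t => h (ω, t)) hhint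
  constructor
  · calc ∫ ω, Z ω * g (U ω) ∂μ = ∫ ω, ∫ t, h (ω, t) ∂ν ∂μ := by
          exact (integral_congr_ae (Eventually.of_forall fun ω => hleft ω)).symm
    _ = ∫ t, ∫ ω, h (ω, t) ∂μ ∂ν := hswap
    _ = ∫ t in Ioc (0:ℝ) B, (∫ ω in U ⁻¹' {x | t ≤ g x}, Z ω ∂μ) ∂volume := by
          rw [hν]
          exact integral_congr_ae (Eventually.of_forall fun t => hinner t)
  · exact (hhint.integral_prod_right).congr (Eventually.of_forall fun t => hinner t)

/-- Layer-cake comonotone maximization: if `g` is monotone, bounded, nonneg, and `V` has the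
same law as `F ∘ Z` where `F` is monotone, then `E[Z g(V)] ≤ E[Z g(F(Z))]`. -/
lemma aux_comonotone_max {Ω : Type*} [MeasurableSpace Ω] (μ : Measure Ω)
    [IsProbabilityMeasure μ]
    (g : ℝ → ℝ) (hg : Monotone g) (hgm : Measurable g) (B : ℝ)
    (hgB : ∀ x, g x ∈ Icc (0:ℝ) B)
    (Z : Ω → ℝ) (hZm : Measurable Z) (hZint : Integrable Z μ)
    (F : ℝ → ℝ) (hF : Monotone F) (hFm : Measurable F)
    (V : Ω → ℝ) (hVm : Measurable V)
    (hlaw : μ.map V = μ.map (fun ω => F (Z ω))) :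
    ∫ ω, Z ω * g (V ω) ∂μ ≤ ∫ ω, Z ω * g (F (Z ω)) ∂μ := by
  obtain ⟨eqV, intV⟩ := aux_layer μ g hgm B hgB Z hZm hZint V hVm
  obtain ⟨eqFZ, intFZ⟩ := aux_layer μ g hgm B hgB Z hZm hZint (fun ω => F (Z ω)) (hFm.comp hZm)
  rw [eqV, eqFZ]
  refine integral_mono_ae intV intFZ (Filter.Eventually.of_forall fun t => ?_)
  have hTm : MeasurableSet {x : ℝ | t ≤ g x} := hgm measurableSet_Ici
  have hSm' : MeasurableSet {x : ℝ | t ≤ g (F x)} := (hgm.comp hFm) measurableSet_Ici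
  simp only
  refine aux_upper_max μ Z hZm hZint _ (hVm hTm) {x | t ≤ g (F x)}
    (fun x y hx hxy => le_trans hx (hg (hF hxy))) hSm' ?_
  rw [← Measure.map_apply hVm hTm, hlaw,
    Measure.map_apply (show Measurable (fun ω => F (Z ω)) from hFm.comp hZm) hTm]
  rfl

/-- probability integral transform: if the cdf of `ν` is continuous then the pushforward
of `ν` under its cdf is the uniform distribution on `(0,1)`. -/
lemma aux_uniform (ν : Measure ℝ) [IsProbabilityMeasure ν] (hF : Continuous (cdf ν)) :
    ν.map (cdf ν) = volume.restrict (Ioo (0:ℝ) 1) := by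
  have hmono : Monotone (cdf ν) := monotone_cdf ν
  have hFm : Measurable (cdf ν) := hmono.measurable
  haveI : IsProbabilityMeasure (ν.map (cdf ν)) := Measure.isProbabilityMeasure_map hFm.aemeasurable
  refine Measure.ext_of_Iic _ _ fun a => ?_
  rw [Measure.map_apply hFm measurableSet_Iic, Measure.restrict_apply measurableSet_Iic]
  rcases lt_or_ge a 0 with ha | ha
  · -- a < 0 : both sides are 0
    have h1 : (cdf ν) ⁻¹' Iic a = ∅ := by
      ext x; simp only [mem_preimage, mem_Iic, mem_empty_iff_false, iff_false, not_le]
      exact lt_of_lt_of_le ha (cdf_nonneg ν x)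
    have h2 : Iic a ∩ Ioo (0:ℝ) 1 = ∅ := by
      ext x; simp only [mem_inter_iff, mem_Iic, mem_Ioo, mem_empty_iff_false, iff_false]
      rintro ⟨hx1, hx2, _⟩; linarith
    rw [h1, h2]
    simp
  rcases le_or_gt 1 a with ha1 | ha1
  · -- a ≥ 1 : both sides are 1
    have h1 : (cdf ν) ⁻¹' Iic a = univ := by
      ext x; simp only [mem_preimage, mem_Iic, mem_univ, iff_true]
      exact le_trans (cdf_le_one ν x) ha1
    have h2 : Iic a ∩ Ioo (0:ℝ) 1 = Ioo (0:ℝ) 1 := by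
      refine inter_eq_right.2 fun x hx => ?_
      exact le_trans hx.2.le ha1
    rw [h1, h2, Real.volume_Ioo]
    simp
  · -- 0 ≤ a < 1
    have h2 : Iic a ∩ Ioo (0:ℝ) 1 = Ioc (0:ℝ) a := by
      ext x
      simp only [mem_inter_iff, mem_Iic, mem_Ioo, mem_Ioc]
      constructor
      · rintro ⟨h1, h2, h3⟩; exact ⟨h2, h1⟩
      · rintro ⟨h1, h2⟩; exact ⟨h2, h1, lt_of_le_of_lt h2 ha1⟩
    rw [h2, Real.volume_Ioc, sub_zero]
    set S := (cdf ν) ⁻¹' Iic a with hSdef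
    rcases S.eq_empty_or_nonempty with hSe | hSne
    · -- S empty forces a = 0 (since cdf → 0 at -∞ and a ≥ 0)
      have ha0 : a = 0 := by
        by_contra h0
        have hapos : 0 < a := lt_of_le_of_ne ha (Ne.symm h0)
        have := tendsto_cdf_atBot ν
        have hev : ∀ᶠ x in atBot, cdf ν x < a := this.eventually_lt_const hapos
        obtain ⟨x, hx⟩ := hev.exists
        exact absurd (hSe ▸ (show x ∈ S from hx.le)) (notMem_empty x)
      rw [hSe, ha0]
      simp
    · -- S = Iic s with F s = a
      have hSbdd : BddAbove S := by
        have h1' : Tendsto (cdf ν) atTop (𝓝 1) := tendsto_cdf_atTop ν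
        have hev : ∀ᶠ x in atTop, a < cdf ν x := h1'.eventually_const_lt ha1
        obtain ⟨x₀, hx₀⟩ := hev.exists
        refine ⟨x₀, fun x hx => ?_⟩
        by_contra hc
        push_neg at hc
        have h3 : cdf ν x₀ ≤ cdf ν x := hmono hc.le
        have h4 : cdf ν x ≤ a := hx
        linarith
      have hSclosed : IsClosed S := IsClosed.preimage hF isClosed_Iic
      have hs : sSup S ∈ S := hSclosed.csSup_mem hSne hSbdd
      set s := sSup S with hsdef
      have hFs_le : cdf ν s ≤ a := hs
      have hFs_ge : a ≤ cdf ν s := by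
        have htend : Tendsto (cdf ν) (𝓝[>] s) (𝓝 (cdf ν s)) :=
          (hF.tendsto s).mono_left nhdsWithin_le_nhds
        refine ge_of_tendsto htend (eventually_nhdsWithin_of_forall fun x hx => ?_)
        by_contra hc
        push_neg at hc
        exact absurd (le_csSup hSbdd (show x ∈ S from hc.le)) (not_le.2 hx)
      have hSIic : S = Iic s := by
        ext x
        constructor
        · exact fun hx => le_csSup hSbdd hx
        · intro hx
          show cdf ν x ≤ a
          exact le_trans (hmono hx) hFs_le
      rw [hSIic, ← ofReal_cdf ν s, le_antisymm hFs_le hFs_ge]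


/-- A (slanted) line in the plane has Lebesgue measure zero. -/
lemma aux_line_null (ε x : ℝ) :
    (volume : Measure (ℝ × ℝ)) {p : ℝ × ℝ | p.1 + ε * p.2 = x} = 0 := by
  have hL : MeasurableSet {p : ℝ × ℝ | p.1 + ε * p.2 = x} :=
    (measurable_fst.add (measurable_snd.const_mul ε)) (measurableSet_singleton x)
  rw [MeasureTheory.Measure.volume_eq_prod, Measure.prod_apply hL]
  have hae : (fun y => volume (Prod.mk y ⁻¹' {p : ℝ × ℝ | p.1 + ε * p.2 = x}))
      =ᵐ[volume] 0 := by
    rcases eq_or_ne ε 0 with hε | hε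
    · have h0 : volume ({x} : Set ℝ) = 0 := measure_singleton x
      filter_upwards [measure_eq_zero_iff_ae_notMem.mp h0] with y hy
      have : Prod.mk y ⁻¹' {p : ℝ × ℝ | p.1 + ε * p.2 = x} = ∅ := by
        ext w
        simp only [mem_preimage, mem_setOf_eq, mem_empty_iff_false, iff_false, hε]
        intro hc
        exact hy (by simpa using hc)
      simp [this]
    · refine Eventually.of_forall fun y => ?_
      have : Prod.mk y ⁻¹' {p : ℝ × ℝ | p.1 + ε * p.2 = x} = {(x - y) / ε} := by
        ext w
        simp only [mem_preimage, mem_setOf_eq, mem_singleton_iff]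
        constructor
        · intro h; field_simp; linarith
        · intro h; rw [h]; field_simp; ring
      simp [this]
  rw [lintegral_congr_ae hae]
  simp


lemma aux_bddBelow (ν : Measure ℝ) [IsProbabilityMeasure ν] {u : ℝ} (hu : 0 < u) :
    BddBelow {x : ℝ | u ≤ cdf ν x} := by
  have h0 : Tendsto (cdf ν) atBot (𝓝 0) := tendsto_cdf_atBot ν
  obtain ⟨y, hy⟩ := (h0.eventually_lt_const hu).exists
  refine ⟨y, fun z hz => ?_⟩
  by_contra hc
  push_neg at hc
  have : cdf ν z ≤ cdf ν y := monotone_cdf ν hc.le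
  have : u ≤ cdf ν y := le_trans hz this
  linarith


/-- the quantile is in the set: `u ≤ F (q u)` for `0 < u < 1`. -/
lemma aux_le_cdf_quantileFn (ν : Measure ℝ) [IsProbabilityMeasure ν] {u : ℝ}
    (hu : u ∈ Ioo (0:ℝ) 1) : u ≤ cdf ν (quantileFn ν u) := by
  have hne : {x : ℝ | u ≤ cdf ν x}.Nonempty := by
    have h1 : Tendsto (cdf ν) atTop (𝓝 1) := tendsto_cdf_atTop ν
    obtain ⟨y, hy⟩ := (h1.eventually_const_lt hu.2).exists
    exact ⟨y, hy.le⟩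
  set s := quantileFn ν u with hs
  have htend : Tendsto (cdf ν) (𝓝[>] s) (𝓝 (cdf ν s)) :=
    ((cdf ν).right_continuous s).tendsto.mono_left (nhdsWithin_mono _ Ioi_subset_Ici_self)
  refine ge_of_tendsto htend (eventually_nhdsWithin_of_forall fun x hx => ?_)
  obtain ⟨z, hz, hzx⟩ := exists_lt_of_csInf_lt hne hx
  exact le_trans hz (monotone_cdf ν hzx.le)


lemma aux_quantileFn_le (ν : Measure ℝ) [IsProbabilityMeasure ν] {u x : ℝ}
    (hu : 0 < u) (hux : u ≤ cdf ν x) : quantileFn ν u ≤ x :=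
  csInf_le (aux_bddBelow ν hu) hux

end Aux


/-- Master lemma: the Gâteaux derivative statement for measurable representatives. -/
lemma aux_main {Ω : Type*} [MeasurableSpace Ω] (μ : Measure Ω) [IsProbabilityMeasure μ]
    (γ : ℝ → ℝ) (hγ_meas : Measurable γ) (hγ_mono : MonotoneOn γ (Set.Icc 0 1))
    (hγ_nonneg : ∀ u ∈ Set.Icc (0:ℝ) 1, 0 ≤ γ u)
    (Y W : Ω → ℝ) (hYm : Measurable Y) (hWm : Measurable W)
    (hYint : Integrable Y μ) (hWint : Integrable W μ)
    (hatom0 : ∀ x : ℝ, (μ.map Y) {x} = 0)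
    (hatoms : ∀ ε : ℝ, ε ≠ 0 → ∀ x : ℝ, (μ.map (fun ω => Y ω + ε * W ω)) {x} = 0)
    (δ K : ℝ) (hδ : 0 < δ) (hK : 0 ≤ K)
    (hlip : ∀ u ∈ Set.Ioo (0:ℝ) 1, ∀ ε ∈ Set.Ioo (-δ) δ,
      |quantileFn (μ.map (fun ω => Y ω + ε * W ω)) u - quantileFn (μ.map Y) u| ≤ K * |ε|) :
    Filter.Tendsto (fun ε : ℝ => (distRM μ γ (fun ω => Y ω + ε * W ω) - distRM μ γ Y) / ε)
      (𝓝[≠] (0:ℝ)) (𝓝 (∫ ω, W ω * γ (cdf (μ.map Y) (Y ω)) ∂μ)) := by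
  classical
  set g : ℝ → ℝ := fun x => γ (clamp01 x) with hgdef
  have hgmono : Monotone g := fun a b hab =>
    hγ_mono (clamp01_mem a) (clamp01_mem b) (clamp01_monotone hab)
  have hgm : Measurable g := hγ_meas.comp clamp01_measurable
  set B : ℝ := γ 1 with hBdef
  have hgB : ∀ x, g x ∈ Set.Icc (0:ℝ) B := by
    intro x
    refine ⟨hγ_nonneg _ (clamp01_mem x), ?_⟩
    exact hγ_mono (clamp01_mem x) (by norm_num) (clamp01_mem x).2
  have hB0 : 0 ≤ B := le_trans (hgB 0).1 (hgB 0).2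
  have hgγ : ∀ x : ℝ, 0 ≤ x → x ≤ 1 → g x = γ x := by
    intro x h1 h2
    show γ (clamp01 x) = γ x
    rw [clamp01_of_mem ⟨h1, h2⟩]
  set Z : ℝ → Ω → ℝ := fun ε ω => Y ω + ε * W ω with hZdef
  have hZm : ∀ ε, Measurable (Z ε) := fun ε => hYm.add (hWm.const_mul ε)
  have hZint : ∀ ε, Integrable (Z ε) μ := fun ε => hYint.add (hWint.const_mul ε)
  set F : ℝ → ℝ → ℝ := fun ε => ⇑(cdf (μ.map (Z ε))) with hFdef
  set F0 : ℝ → ℝ := ⇑(cdf (μ.map Y)) with hF0def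
  haveI hP0 : IsProbabilityMeasure (μ.map Y) := Measure.isProbabilityMeasure_map hYm.aemeasurable
  have hPε : ∀ ε : ℝ, IsProbabilityMeasure (μ.map (Z ε)) :=
    fun ε => Measure.isProbabilityMeasure_map (hZm ε).aemeasurable
  have hF0cont : Continuous F0 := aux_cdf_continuous _ hatom0
  have hFcont : ∀ ε : ℝ, ε ≠ 0 → Continuous (F ε) := by
    intro ε hε
    haveI := hPε ε
    exact aux_cdf_continuous _ (hatoms ε hε)
  have hF0m : Measurable F0 := (monotone_cdf _).measurable
  have hFm : ∀ ε, Measurable (F ε) := fun ε => (monotone_cdf _).measurable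
  have hF0mono : Monotone F0 := monotone_cdf _
  have hFmono : ∀ ε, Monotone (F ε) := fun ε => monotone_cdf _
  -- laws of the transformed variables
  have hlawε : ∀ ε : ℝ, ε ≠ 0 →
      μ.map (fun ω => F ε (Z ε ω)) = volume.restrict (Set.Ioo (0:ℝ) 1) := by
    intro ε hε
    haveI := hPε ε
    have h1 : μ.map (fun ω => F ε (Z ε ω)) = (μ.map (Z ε)).map (F ε) := by
      rw [Measure.map_map (hFm ε) (hZm ε)]
      rfl
    rw [h1]
    exact aux_uniform _ (hFcont ε hε)
  have hlaw0 : μ.map (fun ω => F0 (Y ω)) = volume.restrict (Set.Ioo (0:ℝ) 1) := by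
    have h1 : μ.map (fun ω => F0 (Y ω)) = (μ.map Y).map F0 := by
      rw [Measure.map_map hF0m hYm]
      rfl
    rw [h1]
    exact aux_uniform _ hF0cont
  -- integrability of the products
  have hmul : ∀ (X V : Ω → ℝ), Measurable V → Integrable X μ →
      Integrable (fun ω => X ω * g (V ω)) μ := by
    intro X V hVm hXint
    have h1 : Integrable (fun ω => g (V ω) * X ω) μ := by
      refine Integrable.bdd_mul hXint
        (Measurable.aestronglyMeasurable (show Measurable (fun ω => g (V ω)) from hgm.comp hVm))
        (c := B) (Filter.Eventually.of_forall fun ω => ?_)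
      rw [Real.norm_eq_abs, abs_le]
      exact ⟨by linarith [(hgB (V ω)).1], (hgB (V ω)).2⟩
    exact h1.congr (Filter.Eventually.of_forall fun ω => by ring)
  -- rewriting distRM in terms of g
  have hrw : ∀ ε : ℝ, distRM μ γ (fun ω => Y ω + ε * W ω)
      = ∫ ω, Z ε ω * g (F ε (Z ε ω)) ∂μ := by
    intro ε
    unfold distRM
    refine integral_congr_ae (Filter.Eventually.of_forall fun ω => ?_)
    beta_reduce
    rw [hgγ _ (cdf_nonneg _ _) (cdf_le_one _ _)]
  have hrw0 : distRM μ γ Y = ∫ ω, Y ω * g (F0 (Y ω)) ∂μ := by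
    unfold distRM
    refine integral_congr_ae (Filter.Eventually.of_forall fun ω => ?_)
    beta_reduce
    rw [hgγ _ (cdf_nonneg _ _) (cdf_le_one _ _)]
  have hrwG : ∫ ω, W ω * γ (cdf (μ.map Y) (Y ω)) ∂μ = ∫ ω, W ω * g (F0 (Y ω)) ∂μ := by
    refine integral_congr_ae (Filter.Eventually.of_forall fun ω => ?_)
    beta_reduce
    rw [hgγ _ (cdf_nonneg _ _) (cdf_le_one _ _)]
  -- the two comonotonicity inequalities
  have ineq1 : ∀ ε : ℝ, ε ≠ 0 →
      ∫ ω, Y ω * g (F ε (Z ε ω)) ∂μ ≤ ∫ ω, Y ω * g (F0 (Y ω)) ∂μ := by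
    intro ε hε
    exact aux_comonotone_max μ g hgmono hgm B hgB Y hYm hYint F0 hF0mono hF0m
      (fun ω => F ε (Z ε ω)) ((hFm ε).comp (hZm ε)) (by rw [hlawε ε hε, hlaw0])
  have ineq2 : ∀ ε : ℝ, ε ≠ 0 →
      ∫ ω, Z ε ω * g (F0 (Y ω)) ∂μ ≤ ∫ ω, Z ε ω * g (F ε (Z ε ω)) ∂μ := by
    intro ε hε
    exact aux_comonotone_max μ g hgmono hgm B hgB (Z ε) (hZm ε) (hZint ε) (F ε) (hFmono ε)
      (hFm ε) (fun ω => F0 (Y ω)) (hF0m.comp hYm) (by rw [hlaw0, hlawε ε hε])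
  -- splitting the integral of Z ε
  have hsplit : ∀ (ε : ℝ) (V : Ω → ℝ), Measurable V →
      ∫ ω, Z ε ω * g (V ω) ∂μ
        = ∫ ω, Y ω * g (V ω) ∂μ + ε * ∫ ω, W ω * g (V ω) ∂μ := by
    intro ε V hVm
    rw [← integral_const_mul, ← integral_add (hmul Y V hVm hYint)]
    · refine integral_congr_ae (Filter.Eventually.of_forall fun ω => ?_)
      show Z ε ω * g (V ω) = Y ω * g (V ω) + ε * (W ω * g (V ω))
      rw [hZdef]
      ring
    · exact (hmul W V hVm hWint).const_mul ε
  -- the sandwich for the difference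
  have hsand : ∀ ε : ℝ, ε ≠ 0 →
      ε * (∫ ω, W ω * g (F0 (Y ω)) ∂μ)
        ≤ (∫ ω, Z ε ω * g (F ε (Z ε ω)) ∂μ) - ∫ ω, Y ω * g (F0 (Y ω)) ∂μ
      ∧ (∫ ω, Z ε ω * g (F ε (Z ε ω)) ∂μ) - ∫ ω, Y ω * g (F0 (Y ω)) ∂μ
        ≤ ε * (∫ ω, W ω * g (F ε (Z ε ω)) ∂μ) := by
    intro ε hε
    constructor
    · have h1 := ineq2 ε hε
      rw [hsplit ε _ (show Measurable (fun ω => F0 (Y ω)) from hF0m.comp hYm)] at h1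
      linarith
    · have h1 := ineq1 ε hε
      have h2 := hsplit ε _ (show Measurable (fun ω => F ε (Z ε ω)) from (hFm ε).comp (hZm ε))
      rw [h2]
      linarith
  -- sandwich for the cdfs from the quantile Lipschitz bound
  have hcdf_sand : ∀ ε : ℝ, ε ≠ 0 → ε ∈ Set.Ioo (-δ) δ → ∀ x : ℝ,
      F0 (x - K * |ε|) ≤ F ε x ∧ F ε x ≤ F0 (x + K * |ε|) := by
    intro ε hε hεδ x
    haveI := hPε ε
    constructor
    · by_contra hc
      push_neg at hc
      obtain ⟨u, hu1, hu2⟩ := exists_between hc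
      have hu0 : 0 < u := lt_of_le_of_lt (cdf_nonneg _ x) hu1
      have hu_lt1 : u < 1 := lt_of_lt_of_le hu2 (cdf_le_one _ _)
      have hq0 : quantileFn (μ.map Y) u ≤ x - K * |ε| := aux_quantileFn_le _ hu0 hu2.le
      have hqε : quantileFn (μ.map (Z ε)) u ≤ x := by
        have h3 := abs_le.1 (hlip u ⟨hu0, hu_lt1⟩ ε hεδ)
        have h4 := h3.2
        simp only [sub_le_iff_le_add] at h4
        calc quantileFn (μ.map (Z ε)) u ≤ K * |ε| + quantileFn (μ.map Y) u := h4
        _ ≤ K * |ε| + (x - K * |ε|) := by linarith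
        _ = x := by ring
      have h5 : u ≤ F ε x :=
        le_trans (aux_le_cdf_quantileFn _ ⟨hu0, hu_lt1⟩) (hFmono ε hqε)
      linarith
    · by_contra hc
      push_neg at hc
      obtain ⟨u, hu1, hu2⟩ := exists_between hc
      have hu0 : 0 < u := lt_of_le_of_lt (cdf_nonneg _ _) hu1
      have hu_lt1 : u < 1 := lt_of_lt_of_le hu2 (cdf_le_one _ _)
      have hqε : quantileFn (μ.map (Z ε)) u ≤ x := aux_quantileFn_le _ hu0 hu2.le
      have hq0 : quantileFn (μ.map Y) u ≤ x + K * |ε| := by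
        have h3 := abs_le.1 (hlip u ⟨hu0, hu_lt1⟩ ε hεδ)
        have h4 := h3.1
        linarith
      have h5 : u ≤ F0 (x + K * |ε|) :=
        le_trans (aux_le_cdf_quantileFn _ ⟨hu0, hu_lt1⟩) (hF0mono hq0)
      linarith
  -- eventual membership
  have hev : ∀ᶠ ε in 𝓝[≠] (0:ℝ), ε ∈ Set.Ioo (-δ) δ ∧ ε ≠ 0 := by
    have h1 : ∀ᶠ ε in 𝓝[≠] (0:ℝ), ε ∈ Set.Ioo (-δ) δ :=
      eventually_nhdsWithin_of_eventually_nhds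
        (Filter.eventually_of_mem (Ioo_mem_nhds (by linarith) hδ) fun x hx => hx)
    have h2 : ∀ᶠ ε in 𝓝[≠] (0:ℝ), ε ≠ 0 := self_mem_nhdsWithin
    exact h1.and h2
  -- pointwise convergence of the transforms
  have hUconv : ∀ ω, Filter.Tendsto (fun ε => F ε (Z ε ω)) (𝓝[≠] (0:ℝ)) (𝓝 (F0 (Y ω))) := by
    intro ω
    have hlo : Filter.Tendsto (fun ε : ℝ => F0 (Y ω + ε * W ω - K * |ε|)) (𝓝[≠] (0:ℝ))
        (𝓝 (F0 (Y ω))) := by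
      have hcont : Continuous (fun ε : ℝ => Y ω + ε * W ω - K * |ε|) :=
        (continuous_const.add (continuous_id.mul continuous_const)).sub
          (continuous_const.mul continuous_abs)
      have harg : Filter.Tendsto (fun ε : ℝ => Y ω + ε * W ω - K * |ε|) (𝓝 (0:ℝ))
          (𝓝 (Y ω)) := by
        have h0 : Y ω + (0:ℝ) * W ω - K * |(0:ℝ)| = Y ω := by simp
        simpa [h0] using hcont.tendsto 0
      exact (hF0cont.tendsto _).comp (harg.mono_left nhdsWithin_le_nhds)
    have hhi : Filter.Tendsto (fun ε : ℝ => F0 (Y ω + ε * W ω + K * |ε|)) (𝓝[≠] (0:ℝ))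
        (𝓝 (F0 (Y ω))) := by
      have hcont : Continuous (fun ε : ℝ => Y ω + ε * W ω + K * |ε|) :=
        (continuous_const.add (continuous_id.mul continuous_const)).add
          (continuous_const.mul continuous_abs)
      have harg : Filter.Tendsto (fun ε : ℝ => Y ω + ε * W ω + K * |ε|) (𝓝 (0:ℝ))
          (𝓝 (Y ω)) := by
        have h0 : Y ω + (0:ℝ) * W ω + K * |(0:ℝ)| = Y ω := by simp
        simpa [h0] using hcont.tendsto 0
      exact (hF0cont.tendsto _).comp (harg.mono_left nhdsWithin_le_nhds)
    refine tendsto_of_tendsto_of_tendsto_of_le_of_le' hlo hhi ?_ ?_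
    · filter_upwards [hev] with ε ⟨hεδ, hε⟩
      exact (hcdf_sand ε hε hεδ (Z ε ω)).1
    · filter_upwards [hev] with ε ⟨hεδ, hε⟩
      exact (hcdf_sand ε hε hεδ (Z ε ω)).2
  -- a.e. continuity points
  have hD : Set.Countable {x : ℝ | ¬ ContinuousAt g x} := hgmono.countable_not_continuousAt
  have hae : ∀ᵐ ω ∂μ, ContinuousAt g (F0 (Y ω)) := by
    have hDm : MeasurableSet {x : ℝ | ¬ ContinuousAt g x} := hD.measurableSet
    have h1 : μ ((fun ω => F0 (Y ω)) ⁻¹' {x | ¬ ContinuousAt g x}) = 0 := by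
      rw [← Measure.map_apply (show Measurable (fun ω => F0 (Y ω)) from hF0m.comp hYm) hDm, hlaw0,
        Measure.restrict_apply hDm]
      exact measure_mono_null Set.inter_subset_left (hD.measure_zero _)
    rw [ae_iff]
    exact h1
  -- dominated convergence for H
  have hH : Filter.Tendsto (fun ε => ∫ ω, W ω * g (F ε (Z ε ω)) ∂μ) (𝓝[≠] (0:ℝ))
      (𝓝 (∫ ω, W ω * g (F0 (Y ω)) ∂μ)) := by
    refine tendsto_integral_filter_of_dominated_convergence (fun ω => |W ω| * B) ?_ ?_ ?_ ?_
    · refine Filter.Eventually.of_forall fun ε => ?_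
      exact (hWm.mul (hgm.comp ((hFm ε).comp (hZm ε)))).aestronglyMeasurable
    · refine Filter.Eventually.of_forall fun ε => ?_
      refine Filter.Eventually.of_forall fun ω => ?_
      rw [Real.norm_eq_abs, abs_mul]
      refine mul_le_mul_of_nonneg_left ?_ (abs_nonneg _)
      rw [abs_le]
      exact ⟨by linarith [(hgB (F ε (Z ε ω))).1], (hgB (F ε (Z ε ω))).2⟩
    · exact hWint.abs.mul_const B
    · filter_upwards [hae] with ω hgc
      exact (hgc.tendsto.comp (hUconv ω)).const_mul (W ω)
  -- final assembly
  rw [hrwG]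
  have hfun : (fun ε : ℝ => (distRM μ γ (fun ω => Y ω + ε * W ω) - distRM μ γ Y) / ε)
      = fun ε : ℝ => ((∫ ω, Z ε ω * g (F ε (Z ε ω)) ∂μ) - ∫ ω, Y ω * g (F0 (Y ω)) ∂μ) / ε := by
    funext ε
    rw [hrw ε, hrw0]
  rw [hfun]
  set G : ℝ := ∫ ω, W ω * g (F0 (Y ω)) ∂μ with hGdef
  set H : ℝ → ℝ := fun ε => ∫ ω, W ω * g (F ε (Z ε ω)) ∂μ with hHdef
  have hbnd : ∀ᶠ ε in 𝓝[≠] (0:ℝ),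
      |((∫ ω, Z ε ω * g (F ε (Z ε ω)) ∂μ) - ∫ ω, Y ω * g (F0 (Y ω)) ∂μ) / ε - G|
        ≤ |H ε - G| := by
    filter_upwards [hev] with ε ⟨hεδ, hε⟩
    obtain ⟨h1, h2⟩ := hsand ε hε
    set N : ℝ := (∫ ω, Z ε ω * g (F ε (Z ε ω)) ∂μ) - ∫ ω, Y ω * g (F0 (Y ω)) ∂μ with hNdef
    rcases lt_or_gt_of_ne hε with hneg | hpos
    · have hq1 : N / ε ≤ G := by
        rw [div_le_iff_of_neg hneg]
        linarith
      have hq2 : H ε ≤ N / ε := by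
        rw [le_div_iff_of_neg hneg]
        linarith
      rw [abs_of_nonpos (by linarith), abs_of_nonpos (by linarith)]
      linarith
    · have hq1 : G ≤ N / ε := by
        rw [le_div_iff₀ hpos]
        linarith
      have hq2 : N / ε ≤ H ε := by
        rw [div_le_iff₀ hpos]
        linarith
      rw [abs_of_nonneg (by linarith), abs_of_nonneg (by linarith)]
      linarith
  have hHG : Filter.Tendsto (fun ε => |H ε - G|) (𝓝[≠] (0:ℝ)) (𝓝 0) := by
    have h1 : Filter.Tendsto (fun ε => H ε - G) (𝓝[≠] (0:ℝ)) (𝓝 (G - G)) :=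
      hH.sub tendsto_const_nhds
    rw [sub_self] at h1
    simpa using h1.abs
  rw [tendsto_iff_dist_tendsto_zero]
  simp only [Real.dist_eq]
  exact squeeze_zero' (Filter.Eventually.of_forall fun ε => abs_nonneg _) hbnd hHG

/-- Gâteaux derivative of a distortion risk measure: for jointly continuous `(Y, W)` and
under differentiability assumptions on `ε ↦ F⁻¹_{Y+εW}`,
`lim_{ε→0} (ρ(Y + εW) - ρ(Y))/ε = E[W γ(F_Y(Y))]`. -/
theorem stmt14 {Ω : Type*} [MeasurableSpace Ω] (μ : Measure Ω) [IsProbabilityMeasure μ]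
    (γ : ℝ → ℝ) (C : ℝ)
    (hγ_meas : Measurable γ)
    (hγ_mono : MonotoneOn γ (Set.Icc 0 1))
    (hγ_nonneg : ∀ u ∈ Set.Icc (0 : ℝ) 1, 0 ≤ γ u)
    (hγ_int : IntegrableOn γ (Set.Ioo 0 1) volume)
    (hγ_one : ∫ u in Set.Ioo (0 : ℝ) 1, γ u = 1)
    (hγ_sq_int : IntegrableOn (fun u => (γ u) ^ 2) (Set.Ioo 0 1) volume)
    (hγ_sq : ∫ u in Set.Ioo (0 : ℝ) 1, (γ u) ^ 2 ≤ C)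
    (Y W : Ω → ℝ) (hY : MemLp Y 2 μ) (hW : MemLp W 2 μ)
    -- `(Y, W)` has a joint density with respect to Lebesgue measure
    (hdens : ∃ f : ℝ × ℝ → ENNReal, Measurable f ∧
      μ.map (fun ω => (Y ω, W ω)) = (volume : Measure (ℝ × ℝ)).withDensity f)
    -- `ε ↦ F⁻¹_{Y+εW}(u)` is differentiable near `ε = 0` with bounded derivative
    (hdiff : ∃ δ > (0 : ℝ), ∃ K : ℝ, ∀ u ∈ Set.Ioo (0 : ℝ) 1, ∀ ε ∈ Set.Ioo (-δ) δ,
      ∃ d : ℝ, |d| ≤ K ∧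
        HasDerivAt (fun e : ℝ => quantileFn (μ.map (fun ω => Y ω + e * W ω)) u) d ε) :
    Filter.Tendsto
      (fun ε : ℝ => (distRM μ γ (fun ω => Y ω + ε * W ω) - distRM μ γ Y) / ε)
      (𝓝[≠] (0 : ℝ))
      (𝓝 (∫ ω, W ω * γ (cdf (μ.map Y) (Y ω)) ∂μ)) := by
  classical
  -- measurable representatives
  obtain ⟨Y', hY'sm, hYY'⟩ := hY.1
  obtain ⟨W', hW'sm, hWW'⟩ := hW.1
  have hY'm : Measurable Y' := hY'sm.measurable
  have hW'm : Measurable W' := hW'sm.measurable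
  have hY'int : Integrable Y' μ := (hY.integrable (by norm_num)).congr hYY'
  have hW'int : Integrable W' μ := (hW.integrable (by norm_num)).congr hWW'
  have heq : ∀ ε : ℝ, (fun ω => Y ω + ε * W ω) =ᵐ[μ] (fun ω => Y' ω + ε * W' ω) := by
    intro ε
    filter_upwards [hYY', hWW'] with ω h1 h2
    rw [h1, h2]
  have hmap : ∀ ε : ℝ, μ.map (fun ω => Y ω + ε * W ω) = μ.map (fun ω => Y' ω + ε * W' ω) :=
    fun ε => Measure.map_congr (heq ε)
  have hmap0 : μ.map Y = μ.map Y' := Measure.map_congr hYY'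
  have hZ0 : (fun ω => Y' ω + (0:ℝ) * W' ω) = Y' := by funext ω; ring
  -- transfer the distortion risk measures
  have hdist : ∀ ε : ℝ, distRM μ γ (fun ω => Y ω + ε * W ω)
      = distRM μ γ (fun ω => Y' ω + ε * W' ω) := by
    intro ε
    unfold distRM
    rw [hmap ε]
    refine integral_congr_ae ?_
    filter_upwards [heq ε] with ω h1
    rw [h1]
  have hdist0 : distRM μ γ Y = distRM μ γ Y' := by
    unfold distRM
    rw [hmap0]
    refine integral_congr_ae ?_
    filter_upwards [hYY'] with ω h1
    rw [h1]
  have hG : ∫ ω, W ω * γ (cdf (μ.map Y) (Y ω)) ∂μ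
      = ∫ ω, W' ω * γ (cdf (μ.map Y') (Y' ω)) ∂μ := by
    rw [hmap0]
    refine integral_congr_ae ?_
    filter_upwards [hYY', hWW'] with ω h1 h2
    rw [h1, h2]
  -- no atoms, from the joint density
  obtain ⟨f, hfm, hf⟩ := hdens
  have hpair : μ.map (fun ω => (Y' ω, W' ω)) = (volume : Measure (ℝ × ℝ)).withDensity f := by
    rw [← hf]
    refine (Measure.map_congr ?_).symm
    filter_upwards [hYY', hWW'] with ω h1 h2
    rw [h1, h2]
  have hatoms : ∀ ε : ℝ, ∀ x : ℝ, (μ.map (fun ω => Y' ω + ε * W' ω)) {x} = 0 := by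
    intro ε x
    have hZm : Measurable (fun ω => Y' ω + ε * W' ω) := hY'm.add (hW'm.const_mul ε)
    rw [Measure.map_apply hZm (measurableSet_singleton x)]
    have hset : (fun ω => Y' ω + ε * W' ω) ⁻¹' {x}
        = (fun ω => (Y' ω, W' ω)) ⁻¹' {p : ℝ × ℝ | p.1 + ε * p.2 = x} := by
      ext ω; simp [Set.mem_preimage, Set.mem_setOf_eq]
    have hLm : MeasurableSet {p : ℝ × ℝ | p.1 + ε * p.2 = x} :=
      (measurable_fst.add (measurable_snd.const_mul ε)) (measurableSet_singleton x)
    rw [hset, ← Measure.map_apply (hY'm.prodMk hW'm) hLm, hpair, withDensity_apply _ hLm,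
      setLIntegral_measure_zero _ _ (aux_line_null ε x)]
  have hatom0 : ∀ x : ℝ, (μ.map Y') {x} = 0 := by
    intro x
    have := hatoms 0 x
    rwa [hZ0] at this
  -- Lipschitz bound on quantiles from the differentiability hypothesis
  obtain ⟨δ, hδ, K, hKd⟩ := hdiff
  have h0mem : (0:ℝ) ∈ Set.Ioo (-δ) δ := by constructor <;> simp [hδ] <;> linarith
  have hK0 : 0 ≤ K := by
    obtain ⟨d, hd, _⟩ := hKd (1/2) (by norm_num) 0 h0mem
    exact le_trans (abs_nonneg d) hd
  have hlip : ∀ u ∈ Set.Ioo (0:ℝ) 1, ∀ ε ∈ Set.Ioo (-δ) δ,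
      |quantileFn (μ.map (fun ω => Y' ω + ε * W' ω)) u - quantileFn (μ.map Y') u| ≤ K * |ε| := by
    intro u hu ε hε
    choose d hd hderiv using hKd u hu
    set f0 : ℝ → ℝ := fun e => quantileFn (μ.map (fun ω => Y ω + e * W ω)) u with hf0
    set f' : ℝ → ℝ := fun e => if he : e ∈ Set.Ioo (-δ) δ then d e he else 0 with hf'
    have hder : ∀ e ∈ Set.Ioo (-δ) δ, HasDerivWithinAt f0 (f' e) (Set.Ioo (-δ) δ) e := by
      intro e he
      rw [hf']
      simp only [dif_pos he]
      exact (hderiv e he).hasDerivWithinAt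
    have hbound : ∀ e ∈ Set.Ioo (-δ) δ, ‖f' e‖ ≤ K := by
      intro e he
      rw [hf']
      simp only [dif_pos he]
      rw [Real.norm_eq_abs]
      exact hd e he
    have key := Convex.norm_image_sub_le_of_norm_hasDerivWithin_le hder hbound
      (convex_Ioo _ _) h0mem hε
    rw [Real.norm_eq_abs, Real.norm_eq_abs, sub_zero] at key
    have e1 : f0 ε = quantileFn (μ.map (fun ω => Y' ω + ε * W' ω)) u := by
      rw [hf0]; simp only; rw [hmap ε]
    have e2 : f0 0 = quantileFn (μ.map Y') u := by
      rw [hf0]; simp only; rw [hmap 0]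
      congr 1
      rw [hZ0]
    rwa [e1, e2] at key
  -- reduce to the master lemma
  have hfun : (fun ε : ℝ => (distRM μ γ (fun ω => Y ω + ε * W ω) - distRM μ γ Y) / ε)
      = (fun ε : ℝ => (distRM μ γ (fun ω => Y' ω + ε * W' ω) - distRM μ γ Y') / ε) := by
    funext ε
    rw [hdist ε, hdist0]
  rw [hfun, hG]
  exact aux_main μ γ hγ_meas hγ_mono hγ_nonneg Y' W' hY'm hW'm hY'int hW'int hatom0
    (fun ε _ x => hatoms ε x) δ K hδ hK0 hlip
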